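/- With h on ℂ^{m+n} given by [[0,0,Id_m],[0,-Id_{n-m},0],[Id_m,0,0]], the set of maximal isotropic subspaces transverse to v_∞ = span(e₁,…,e_m) is parametrized bijectively by M((n-m)×m,ℂ) × u(m) via (X,Y) ↦ column span of [Y + X*X/2; X; Id_m]. -/

import Mathlib

open Matrix Module

/-- The Hermitian pairing `h(u,v) = u* H v` associated to a matrix `H`. -/
noncomputable def sform {ι : Type*} [Fintype ι] (H : Matrix ι ι ℂ) (u v : ι → ℂ) : ℂ :=
  star u ⬝ᵥ H.mulVec v

/-- The Hermitian form of signature `(m, n)` (with `l = n - m`) on `ℂ^{m+n}` given by the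
block matrix `[[0,0,1],[0,-1,0],[1,0,0]]` with blocks of sizes `m`, `l`, `m`. -/
def Hmat (m l : ℕ) :
    Matrix (Fin m ⊕ (Fin l ⊕ Fin m)) (Fin m ⊕ (Fin l ⊕ Fin m)) ℂ :=
  fromBlocks 0 (fromCols 0 1) (fromRows 0 1) (fromBlocks (-1) 0 0 0)

/-- The maximal isotropic subspace `v_∞ = span(e₁,…,e_m)`, realized as the column span of
the stacked matrix `[1; 0; 0]`. -/
noncomputable def vinf (m l : ℕ) : Submodule ℂ ((Fin m ⊕ (Fin l ⊕ Fin m)) → ℂ) :=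
  LinearMap.range (Matrix.mulVecLin
    (fromRows (1 : Matrix (Fin m) (Fin m) ℂ)
      (fromRows (0 : Matrix (Fin l) (Fin m) ℂ) (0 : Matrix (Fin m) (Fin m) ℂ))))

namespace Stmt13Aux

/-- The matrix `[1;0;0]` whose column span is `vinf`. -/
def EE (m l : ℕ) : Matrix (Fin m ⊕ (Fin l ⊕ Fin m)) (Fin m) ℂ :=
  fromRows (1 : Matrix (Fin m) (Fin m) ℂ)
    (fromRows (0 : Matrix (Fin l) (Fin m) ℂ) (0 : Matrix (Fin m) (Fin m) ℂ))

lemma vinf_eq (m l : ℕ) : vinf m l = LinearMap.range (Matrix.mulVecLin (EE m l)) := rfl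

lemma sform_eq {m l : ℕ} (u v : Fin m ⊕ (Fin l ⊕ Fin m) → ℂ) :
    sform (Hmat m l) u v =
      (star fun i => u (Sum.inl i)) ⬝ᵥ (fun i => v (Sum.inr (Sum.inr i)))
      - (star fun i => u (Sum.inr (Sum.inl i))) ⬝ᵥ (fun i => v (Sum.inr (Sum.inl i)))
      + (star fun i => u (Sum.inr (Sum.inr i))) ⬝ᵥ (fun i => v (Sum.inl i)) := by
  simp [sform, Hmat, mulVec, dotProduct, Fintype.sum_sum_type, fromBlocks, fromCols,
    fromRows, one_apply, Finset.mul_sum, mul_ite, Sum.elim]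
  ring

lemma sform_add_left {m l : ℕ} (u v w : Fin m ⊕ (Fin l ⊕ Fin m) → ℂ) :
    sform (Hmat m l) (u + v) w = sform (Hmat m l) u w + sform (Hmat m l) v w := by
  simp [sform, star_add, add_dotProduct]

lemma sform_add_right {m l : ℕ} (u v w : Fin m ⊕ (Fin l ⊕ Fin m) → ℂ) :
    sform (Hmat m l) u (v + w) = sform (Hmat m l) u v + sform (Hmat m l) u w := by
  simp [sform, mulVec_add, dotProduct_add]

lemma NN_comp1 {m l : ℕ} (A : Matrix (Fin m) (Fin m) ℂ) (X : Matrix (Fin l) (Fin m) ℂ)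
    (C : Matrix (Fin m) (Fin m) ℂ) (x : Fin m → ℂ) (i : Fin m) :
    (fromRows A (fromRows X C) *ᵥ x) (Sum.inl i) = (A *ᵥ x) i := by
  simp [fromRows_mulVec]

lemma NN_comp2 {m l : ℕ} (A : Matrix (Fin m) (Fin m) ℂ) (X : Matrix (Fin l) (Fin m) ℂ)
    (C : Matrix (Fin m) (Fin m) ℂ) (x : Fin m → ℂ) (i : Fin l) :
    (fromRows A (fromRows X C) *ᵥ x) (Sum.inr (Sum.inl i)) = (X *ᵥ x) i := by
  simp [fromRows_mulVec]

lemma NN_comp3 {m l : ℕ} (A : Matrix (Fin m) (Fin m) ℂ) (X : Matrix (Fin l) (Fin m) ℂ)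
    (C : Matrix (Fin m) (Fin m) ℂ) (x : Fin m → ℂ) (i : Fin m) :
    (fromRows A (fromRows X C) *ᵥ x) (Sum.inr (Sum.inr i)) = (C *ᵥ x) i := by
  simp [fromRows_mulVec]

lemma sform_NN {m l : ℕ} (A A' : Matrix (Fin m) (Fin m) ℂ) (X X' : Matrix (Fin l) (Fin m) ℂ)
    (x y : Fin m → ℂ) :
    sform (Hmat m l) (fromRows A (fromRows X 1) *ᵥ x) (fromRows A' (fromRows X' 1) *ᵥ y) =
      star x ⬝ᵥ ((Aᴴ + A' - Xᴴ * X') *ᵥ y) := by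
  rw [sform_eq]
  simp only [NN_comp1, NN_comp2, NN_comp3, mulVec_one]
  simp only [star_mulVec, dotProduct_mulVec, vecMul_vecMul, vecMul_add, vecMul_sub,
    add_dotProduct, sub_dotProduct, conjTranspose_one, Matrix.one_mul, Matrix.mul_one]
  ring

lemma sform_E_right {m l : ℕ} (v : Fin m ⊕ (Fin l ⊕ Fin m) → ℂ) (y : Fin m → ℂ) :
    sform (Hmat m l) v (EE m l *ᵥ y) = (star fun i => v (Sum.inr (Sum.inr i))) ⬝ᵥ y := by
  rw [EE, sform_eq]
  simp only [NN_comp1, NN_comp2, NN_comp3, mulVec_one, zero_mulVec]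
  simp [dotProduct]

lemma sform_EN {m l : ℕ} (A : Matrix (Fin m) (Fin m) ℂ) (X : Matrix (Fin l) (Fin m) ℂ)
    (x y : Fin m → ℂ) :
    sform (Hmat m l) (EE m l *ᵥ x) (fromRows A (fromRows X 1) *ᵥ y) = star x ⬝ᵥ y := by
  rw [EE, sform_eq]
  simp only [NN_comp1, NN_comp2, NN_comp3, mulVec_one, zero_mulVec]
  simp [dotProduct]

lemma vec_eq_zero {m : ℕ} (x : Fin m → ℂ) (h : ∀ y : Fin m → ℂ, star x ⬝ᵥ y = 0) :
    x = 0 := by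
  funext i
  have := h (Pi.single i 1)
  simpa [dotProduct_single, Pi.star_apply, star_eq_zero] using this

lemma mat_eq_zero {m : ℕ} (G : Matrix (Fin m) (Fin m) ℂ)
    (h : ∀ x y : Fin m → ℂ, star x ⬝ᵥ (G *ᵥ y) = 0) : G = 0 := by
  ext i j
  have := h (Pi.single i 1) (Pi.single j 1)
  simpa [mulVec_single, dotProduct, Pi.single_apply, apply_ite] using this

end Stmt13Aux

open Stmt13Aux

theorem stmt13 (m l : ℕ) :
    Set.BijOn
      (fun p : Matrix (Fin l) (Fin m) ℂ × Matrix (Fin m) (Fin m) ℂ =>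
        LinearMap.range (Matrix.mulVecLin
          (fromRows (p.2 + (1 / 2 : ℂ) • (p.1ᴴ * p.1))
            (fromRows p.1 (1 : Matrix (Fin m) (Fin m) ℂ)))))
      {p : Matrix (Fin l) (Fin m) ℂ × Matrix (Fin m) (Fin m) ℂ | p.2ᴴ = -p.2}
      {z : Submodule ℂ ((Fin m ⊕ (Fin l ⊕ Fin m)) → ℂ) |
        finrank ℂ z = m ∧
        (∀ u ∈ z, ∀ v ∈ z, sform (Hmat m l) u v = 0) ∧
        z ⊓ vinf m l = ⊥ ∧
        (∀ v ∈ z ⊔ vinf m l, (∀ w ∈ z ⊔ vinf m l, sform (Hmat m l) v w = 0) → v = 0)} := by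
  have half : ∀ X : Matrix (Fin l) (Fin m) ℂ,
      (1/2 : ℂ) • (Xᴴ * X) + (1/2 : ℂ) • (Xᴴ * X) = Xᴴ * X := by
    intro X; rw [← add_smul]; norm_num
  refine ⟨?_, ?_, ?_⟩
  · -- MapsTo
    rintro ⟨X, Y⟩ hY
    simp only [Set.mem_setOf_eq] at hY ⊢
    set A : Matrix (Fin m) (Fin m) ℂ := Y + (1/2 : ℂ) • (Xᴴ * X) with hA
    set N : Matrix (Fin m ⊕ (Fin l ⊕ Fin m)) (Fin m) ℂ := fromRows A (fromRows X 1) with hN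
    have hinj : Function.Injective (Matrix.mulVecLin N) := by
      intro x y hxy
      funext i
      have := congrFun hxy (Sum.inr (Sum.inr i))
      simpa [mulVecLin_apply, hN, NN_comp3, mulVec_one] using this
    have hG : Aᴴ + A - Xᴴ * X = 0 := by
      rw [hA]
      simp only [conjTranspose_add, conjTranspose_smul, hY, conjTranspose_mul,
        conjTranspose_conjTranspose]
      rw [show (star (1/2 : ℂ)) = (1/2 : ℂ) by rw [star_div₀, star_one]; norm_num]
      module
    refine ⟨?_, ?_, ?_, ?_⟩
    · rw [LinearMap.finrank_range_of_inj hinj]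
      simp
    · rintro u ⟨x, rfl⟩ v ⟨y, rfl⟩
      simp only [mulVecLin_apply, hN, sform_NN, hG, zero_mulVec, dotProduct_zero]
    · rw [eq_bot_iff]
      rintro v ⟨⟨x, rfl⟩, hv2⟩
      rw [vinf_eq] at hv2
      obtain ⟨y, hy⟩ := hv2
      have hx : x = 0 := by
        funext i
        have := congrFun hy (Sum.inr (Sum.inr i))
        simp only [mulVecLin_apply, EE, NN_comp3, zero_mulVec, Pi.zero_apply, hN,
          mulVec_one] at this
        simpa using this.symm
      simp [hx]
    · intro v hv hall
      rw [Submodule.mem_sup] at hv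
      obtain ⟨a, ⟨x, rfl⟩, b, hb, rfl⟩ := hv
      rw [vinf_eq] at hb
      obtain ⟨w, rfl⟩ := hb
      have hx : x = 0 := by
        apply vec_eq_zero
        intro y
        have := hall (EE m l *ᵥ y)
          (Submodule.mem_sup_right (by rw [vinf_eq]; exact ⟨y, rfl⟩))
        rw [mulVecLin_apply, mulVecLin_apply, sform_add_left, sform_E_right,
          sform_E_right] at this
        have h1 : (star fun i => (N *ᵥ x) (Sum.inr (Sum.inr i))) ⬝ᵥ y = star x ⬝ᵥ y := by
          simp [hN, NN_comp3, mulVec_one]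
        have h2 : (star fun i => (EE m l *ᵥ w) (Sum.inr (Sum.inr i))) ⬝ᵥ y = 0 := by
          simp [EE, NN_comp3, dotProduct]
        rw [h1, h2] at this
        simpa using this
      have hw : w = 0 := by
        apply vec_eq_zero
        intro y
        have := hall (N *ᵥ y) (Submodule.mem_sup_left ⟨y, rfl⟩)
        rw [mulVecLin_apply, mulVecLin_apply, sform_add_left] at this
        rw [hx] at this
        simp only [mulVec_zero, hN] at this
        rw [show (0 : Fin m ⊕ (Fin l ⊕ Fin m) → ℂ) = EE m l *ᵥ 0 by simp] at this
        rw [sform_EN, sform_EN] at this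
        simpa using this
      simp [hx, hw]
  · -- InjOn
    rintro ⟨X, Y⟩ hY ⟨X', Y'⟩ hY' h
    simp only at h
    set A : Matrix (Fin m) (Fin m) ℂ := Y + (1/2 : ℂ) • (Xᴴ * X) with hA
    set A' : Matrix (Fin m) (Fin m) ℂ := Y' + (1/2 : ℂ) • (X'ᴴ * X') with hA'
    have key : ∀ x : Fin m → ℂ,
        fromRows A (fromRows X (1 : Matrix (Fin m) (Fin m) ℂ)) *ᵥ x
          = fromRows A' (fromRows X' (1 : Matrix (Fin m) (Fin m) ℂ)) *ᵥ x := by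
      intro x
      have hx : fromRows A (fromRows X 1) *ᵥ x ∈
          LinearMap.range (Matrix.mulVecLin (fromRows A' (fromRows X' (1 : Matrix (Fin m) (Fin m) ℂ)))) := by
        rw [← h]; exact ⟨x, rfl⟩
      obtain ⟨y, hy⟩ := hx
      rw [mulVecLin_apply] at hy
      have hyx : y = x := by
        funext i
        have := congrFun hy (Sum.inr (Sum.inr i))
        simpa [NN_comp3, mulVec_one] using this
      rw [← hy, hyx]
    have hM : fromRows A (fromRows X (1 : Matrix (Fin m) (Fin m) ℂ))
        = fromRows A' (fromRows X' (1 : Matrix (Fin m) (Fin m) ℂ)) := by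
      ext i j
      have := congrFun (key (Pi.single j 1)) i
      simpa [mulVec_single] using this
    have hX : X = X' := by
      ext i j
      have := congrFun (congrFun hM (Sum.inr (Sum.inl i))) j
      simpa [fromRows_apply_inl, fromRows_apply_inr] using this
    have hAA : A = A' := by
      ext i j
      have := congrFun (congrFun hM (Sum.inl i)) j
      simpa [fromRows_apply_inl] using this
    have hYY : Y = Y' := by
      have := hAA
      rw [hA, hA', hX] at this
      exact add_right_cancel this
    exact Prod.ext hX hYY
  · -- SurjOn
    rintro z ⟨hrank, hiso, hint, hnd⟩
    set π3 : ((Fin m ⊕ (Fin l ⊕ Fin m)) → ℂ) →ₗ[ℂ] (Fin m → ℂ) :=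
      LinearMap.funLeft ℂ ℂ (fun i => Sum.inr (Sum.inr i)) with hπ3
    set f : z →ₗ[ℂ] (Fin m → ℂ) := π3 ∘ₗ z.subtype with hf
    have hfinj : Function.Injective f := by
      rw [← LinearMap.ker_eq_bot, eq_bot_iff]
      rintro ⟨v, hv⟩ hker
      have hv3 : (fun i => v (Sum.inr (Sum.inr i))) = 0 := hker
      have : v = 0 := by
        apply hnd v (Submodule.mem_sup_left hv)
        intro w hw
        rw [Submodule.mem_sup] at hw
        obtain ⟨a, ha, b, hb, rfl⟩ := hw
        rw [vinf_eq] at hb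
        obtain ⟨y, rfl⟩ := hb
        rw [sform_add_right, hiso v hv a ha, mulVecLin_apply, sform_E_right]
        have : (star fun i => v (Sum.inr (Sum.inr i))) = 0 := by rw [hv3]; simp
        rw [this]
        simp
      simp [this]
    have hdim : finrank ℂ z = finrank ℂ (Fin m → ℂ) := by
      rw [hrank]; simp
    set e : z ≃ₗ[ℂ] (Fin m → ℂ) := f.linearEquivOfInjective hfinj hdim with he
    set g : (Fin m → ℂ) →ₗ[ℂ] ((Fin m ⊕ (Fin l ⊕ Fin m)) → ℂ) :=
      z.subtype ∘ₗ (e.symm : (Fin m → ℂ) →ₗ[ℂ] z) with hg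
    set N : Matrix (Fin m ⊕ (Fin l ⊕ Fin m)) (Fin m) ℂ := LinearMap.toMatrix' g with hNdef
    have hNg : ∀ x, N *ᵥ x = g x := by
      intro x
      rw [hNdef, ← Matrix.toLin'_apply, Matrix.toLin'_toMatrix']
    have hgz : ∀ x, g x ∈ z := fun x => (e.symm x).2
    have hrange : LinearMap.range (Matrix.mulVecLin N) = z := by
      apply le_antisymm
      · rintro v ⟨x, rfl⟩
        rw [mulVecLin_apply, hNg]
        exact hgz x
      · intro v hv
        refine ⟨e ⟨v, hv⟩, ?_⟩
        rw [mulVecLin_apply, hNg, hg]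
        simp
    have hbot : ∀ (x : Fin m → ℂ) (i : Fin m), (N *ᵥ x) (Sum.inr (Sum.inr i)) = x i := by
      intro x i
      rw [hNg]
      have : (fun i => (g x) (Sum.inr (Sum.inr i))) = f (e.symm x) := rfl
      have h2 : f (e.symm x) = e (e.symm x) := (f.linearEquivOfInjective_apply hfinj hdim _).symm
      calc (g x) (Sum.inr (Sum.inr i)) = f (e.symm x) i := rfl
        _ = e (e.symm x) i := by rw [h2]
        _ = x i := by rw [e.apply_symm_apply]
    set A : Matrix (Fin m) (Fin m) ℂ := Matrix.of fun i j => N (Sum.inl i) j with hAdef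
    set X : Matrix (Fin l) (Fin m) ℂ := Matrix.of fun i j => N (Sum.inr (Sum.inl i)) j with hXdef
    have hNsplit : N = fromRows A (fromRows X 1) := by
      ext i j
      rcases i with i | i | i
      · simp [hAdef]
      · simp [hXdef]
      · have := hbot (Pi.single j 1) i
        rw [mulVec_single] at this
        simp only [MulOpposite.op_one, one_smul, col_apply] at this
        simp only [fromRows_apply_inr, one_apply]
        rw [this, Pi.single_apply]
    have hG : Aᴴ + A - Xᴴ * X = 0 := by
      apply mat_eq_zero
      intro x y
      rw [← sform_NN, ← hNsplit]
      exact hiso _ (hrange ▸ ⟨x, rfl⟩) _ (hrange ▸ ⟨y, rfl⟩)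
    refine ⟨⟨X, A - (1/2 : ℂ) • (Xᴴ * X)⟩, ?_, ?_⟩
    · simp only [Set.mem_setOf_eq, conjTranspose_sub, conjTranspose_smul, conjTranspose_mul,
        conjTranspose_conjTranspose]
      rw [show (star (1/2 : ℂ)) = (1/2 : ℂ) by rw [star_div₀, star_one]; norm_num]
      have hA' : Aᴴ = Xᴴ * X - A := by
        rw [← sub_eq_zero]
        rw [← hG]
        abel
      rw [hA']
      module
    · simp only
      rw [sub_add_cancel, ← hNsplit, hrange]
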